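/- Let (G,·,∘) be a bi-skew brace such that the group (G,∘) is finite cyclic. Then every subgroup of (G,∘) is a left ideal of (G,·,∘). -/

import Mathlib

def IsSkewBrace {G : Type*} (dot circ : Group G) : Prop :=
  ∀ σ τ κ : G,
    circ.mul σ (dot.mul τ κ) =
      dot.mul (dot.mul (circ.mul σ τ) (dot.inv σ)) (circ.mul σ κ)

def gammaFun {G : Type*} (dot circ : Group G) (σ τ : G) : G :=
  dot.mul (dot.inv σ) (circ.mul σ τ)

def IsSubgroupOf {G : Type*} (S : Group G) (H : Set G) : Prop :=
  S.one ∈ H ∧ (∀ a ∈ H, ∀ b ∈ H, S.mul a b ∈ H) ∧ (∀ a ∈ H, S.inv a ∈ H)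

def IsLeftIdeal {G : Type*} (dot circ : Group G) (H : Set G) : Prop :=
  IsSubgroupOf dot H ∧ ∀ σ : G, ∀ τ ∈ H, gammaFun dot circ σ τ ∈ H

def IsStrongLeftIdeal {G : Type*} (dot circ : Group G) (H : Set G) : Prop :=
  IsLeftIdeal dot circ H ∧
    ∀ σ : G, ∀ τ ∈ H, dot.mul (dot.mul σ τ) (dot.inv σ) ∈ H

def IsCharacteristicSubgroupOf {G : Type*} (S : Group G) (H : Set G) : Prop :=
  IsSubgroupOf S H ∧
    ∀ f : G ≃ G, (∀ a b : G, f (S.mul a b) = S.mul (f a) (f b)) → ∀ a ∈ H, f a ∈ H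

def oppGroup {G : Type*} (dot : Group G) : Group G :=
  letI := dot
  { mul := fun a b => b * a
    one := (1 : G)
    inv := fun a => a⁻¹
    div := fun a b => b⁻¹ * a
    div_eq_mul_inv := fun _ _ => rfl
    npow := fun n x => @npowRec G ⟨(1 : G)⟩ ⟨fun a b => b * a⟩ n x
    npow_zero := fun _ => rfl
    npow_succ := fun _ _ => rfl
    zpow := fun n x => @zpowRec G ⟨(1 : G)⟩ ⟨fun a b => b * a⟩ ⟨fun a => a⁻¹⟩
      (@npowRec G ⟨(1 : G)⟩ ⟨fun a b => b * a⟩) n x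
    zpow_zero' := fun _ => rfl
    zpow_succ' := fun _ _ => rfl
    zpow_neg' := fun _ _ => rfl
    mul_assoc := fun a b c => (mul_assoc c b a).symm
    one_mul := fun a => mul_one a
    mul_one := fun a => one_mul a
    inv_mul_cancel := fun a => mul_inv_cancel a }

def lam {G : Type*} (S : Group G) (σ : G) : Equiv.Perm G :=
  letI := S; Equiv.mulLeft σ

def rho {G : Type*} (S : Group G) (σ : G) : Equiv.Perm G :=
  letI := S; Equiv.mulRight σ⁻¹

private theorem aux_char {G : Type*} [Group G] (g : G) (hg : ∀ x : G, ∃ n : ℤ, x = g ^ n)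
    (H : Subgroup G) (f : G →* G) : ∀ a ∈ H, f a ∈ H := by
  obtain ⟨k, hk⟩ := hg (f g)
  intro a ha
  obtain ⟨m, hm⟩ := hg a
  have hfa : f a = a ^ k := by
    rw [hm, map_zpow, hk, ← zpow_mul, mul_comm, zpow_mul]
  rw [hfa]
  exact H.zpow_mem ha k

/-- If `(G,·,∘)` is a bi-skew brace and `(G,∘)` is finite cyclic, then every
subgroup of `(G,∘)` is a left ideal of `(G,·,∘)`. -/
theorem stmt9 {G : Type*} [Finite G] (dot circ : Group G)
    (h1 : IsSkewBrace dot circ) (h2 : IsSkewBrace circ dot)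
    (hcyc : ∃ g : G, ∀ x : G, ∃ n : ℤ, x = circ.zpow n g)
    (H : Set G) (hH : IsSubgroupOf circ H) :
    IsLeftIdeal dot circ H := by
  obtain ⟨g, hg⟩ := hcyc
  have dassoc : ∀ a b c : G, dot.mul (dot.mul a b) c = dot.mul a (dot.mul b c) :=
    fun a b c => by letI := dot; exact mul_assoc a b c
  have done_mul : ∀ a : G, dot.mul dot.one a = a := fun a => by letI := dot; exact one_mul a
  have dmul_one : ∀ a : G, dot.mul a dot.one = a := fun a => by letI := dot; exact mul_one a
  have dinv_mul : ∀ a : G, dot.mul (dot.inv a) a = dot.one :=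
    fun a => by letI := dot; exact inv_mul_cancel a
  have dmul_inv : ∀ a : G, dot.mul a (dot.inv a) = dot.one :=
    fun a => by letI := dot; exact mul_inv_cancel a
  have cassoc : ∀ a b c : G, circ.mul (circ.mul a b) c = circ.mul a (circ.mul b c) :=
    fun a b c => by letI := circ; exact mul_assoc a b c
  have cone_mul : ∀ a : G, circ.mul circ.one a = a := fun a => by letI := circ; exact one_mul a
  have cmul_one : ∀ a : G, circ.mul a circ.one = a := fun a => by letI := circ; exact mul_one a
  have cinv_mul : ∀ a : G, circ.mul (circ.inv a) a = circ.one :=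
    fun a => by letI := circ; exact inv_mul_cancel a
  have cmul_inv : ∀ a : G, circ.mul a (circ.inv a) = circ.one :=
    fun a => by letI := circ; exact mul_inv_cancel a
  have dcancel : ∀ a b : G, dot.mul a (dot.mul (dot.inv a) b) = b := fun a b => by
    rw [← dassoc, dmul_inv, done_mul]
  have dcancel' : ∀ a b : G, dot.mul (dot.inv a) (dot.mul a b) = b := fun a b => by
    rw [← dassoc, dinv_mul, done_mul]
  have ccancel : ∀ a b : G, circ.mul a (circ.mul (circ.inv a) b) = b := fun a b => by
    rw [← cassoc, cmul_inv, cone_mul]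
  have ccancel' : ∀ a b : G, circ.mul (circ.inv a) (circ.mul a b) = b := fun a b => by
    rw [← cassoc, cinv_mul, cone_mul]
  -- the identities coincide
  have hid : ∀ σ : G, circ.mul σ dot.one = σ := by
    intro σ
    have h := h1 σ dot.one dot.one
    rw [done_mul dot.one] at h
    have h2' : dot.mul (circ.mul σ dot.one) (dot.inv (circ.mul σ dot.one)) =
        dot.mul (dot.mul (dot.mul (circ.mul σ dot.one) (dot.inv σ)) (circ.mul σ dot.one))
          (dot.inv (circ.mul σ dot.one)) := by rw [← h]
    rw [dmul_inv, dassoc, dmul_inv, dmul_one] at h2'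
    have h3 : dot.mul (dot.mul (circ.mul σ dot.one) (dot.inv σ)) σ = dot.mul dot.one σ := by
      rw [← h2']
    rw [dassoc, dinv_mul, dmul_one, done_mul] at h3
    exact h3
  have hone : dot.one = circ.one := by
    calc dot.one = circ.mul circ.one dot.one := (cone_mul _).symm
      _ = circ.one := hid circ.one
  -- inverse relations between the two gamma functions
  have hγδ : ∀ σ τ : G, gammaFun dot circ σ (gammaFun circ dot σ τ) = τ := by
    intro σ τ
    show dot.mul (dot.inv σ) (circ.mul σ (circ.mul (circ.inv σ) (dot.mul σ τ))) = τ
    rw [ccancel, dcancel']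
  have hδγ : ∀ σ τ : G, gammaFun circ dot σ (gammaFun dot circ σ τ) = τ := by
    intro σ τ
    show circ.mul (circ.inv σ) (dot.mul σ (dot.mul (dot.inv σ) (circ.mul σ τ))) = τ
    rw [dcancel, ccancel']
  -- δ = gammaFun circ dot is a circ-homomorphism
  have hδc : ∀ σ τ κ : G, gammaFun circ dot σ (circ.mul τ κ) =
      circ.mul (gammaFun circ dot σ τ) (gammaFun circ dot σ κ) := by
    intro σ τ κ
    show circ.mul (circ.inv σ) (dot.mul σ (circ.mul τ κ)) =
      circ.mul (circ.mul (circ.inv σ) (dot.mul σ τ)) (circ.mul (circ.inv σ) (dot.mul σ κ))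
    rw [h2 σ τ κ]
    simp only [← cassoc]
  -- γ = gammaFun dot circ is a circ-homomorphism
  have hγc : ∀ σ τ κ : G, gammaFun dot circ σ (circ.mul τ κ) =
      circ.mul (gammaFun dot circ σ τ) (gammaFun dot circ σ κ) := by
    intro σ τ κ
    calc gammaFun dot circ σ (circ.mul τ κ)
        = gammaFun dot circ σ (circ.mul (gammaFun circ dot σ (gammaFun dot circ σ τ))
            (gammaFun circ dot σ (gammaFun dot circ σ κ))) := by rw [hδγ, hδγ]
      _ = gammaFun dot circ σ (gammaFun circ dot σ
            (circ.mul (gammaFun dot circ σ τ) (gammaFun dot circ σ κ))) := by rw [hδc]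
      _ = circ.mul (gammaFun dot circ σ τ) (gammaFun dot circ σ κ) := hγδ σ _
  -- any circ-endomorphism maps H into H (H is characteristic in the cyclic group (G,∘))
  have hmem : ∀ f : G → G, (∀ τ κ : G, f (circ.mul τ κ) = circ.mul (f τ) (f κ)) →
      ∀ a ∈ H, f a ∈ H := by
    intro f hf
    letI := circ
    exact aux_char g (fun x => hg x)
      ⟨⟨⟨H, fun {a b} ha hb => hH.2.1 a ha b hb⟩, hH.1⟩, fun {a} ha => hH.2.2 a ha⟩
      (MonoidHom.mk' f hf)
  have hmγ : ∀ σ : G, ∀ a ∈ H, gammaFun dot circ σ a ∈ H :=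
    fun σ => hmem (gammaFun dot circ σ) (hγc σ)
  have hmδ : ∀ σ : G, ∀ a ∈ H, gammaFun circ dot σ a ∈ H :=
    fun σ => hmem (gammaFun circ dot σ) (hδc σ)
  refine ⟨⟨?_, ?_, ?_⟩, ?_⟩
  · rw [hone]; exact hH.1
  · intro τ hτ κ hκ
    have key : dot.mul τ κ = circ.mul τ (gammaFun circ dot τ κ) := by
      show dot.mul τ κ = circ.mul τ (circ.mul (circ.inv τ) (dot.mul τ κ))
      rw [ccancel]
    rw [key]
    exact hH.2.1 τ hτ _ (hmδ τ κ hκ)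
  · intro τ hτ
    have key : dot.inv τ = gammaFun dot circ τ (circ.inv τ) := by
      show dot.inv τ = dot.mul (dot.inv τ) (circ.mul τ (circ.inv τ))
      rw [cmul_inv, ← hone, dmul_one]
    rw [key]
    exact hmγ τ _ (hH.2.2 τ hτ)
  · exact fun σ τ hτ => hmγ σ τ hτ
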